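/- Let I be a finite set and (E_i)_{i∈I} a family of finite sets; equip the space ℝ^{E} of real functions on E = Π_{i∈I} E_i with the inner product ⟨f, g⟩ = Σ_{x∈E} f(x)g(x). For a ⊆ I let V_a be the factor subspace of functions depending only on the coordinates in a, and define S_a := V_a ∩ (Σ_{b⊊a} V_b)^⊥. Then for every a ⊆ I, the family (S_b)_{b⊆a} is pairwise orthogonal and V_a = ⊕_{b⊆a} S_b (an orthogonal internal direct sum). -/

import Mathlib

open Submodule

variable {I : Type*} [Fintype I] [DecidableEq I] {Ei : I → Type*} [∀ i, Fintype (Ei i)]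

/-- The factor subspace `V_a` of functions on `E = Π i, E_i` (with the standard inner
product `⟨f, g⟩ = Σ_x f x * g x`, i.e. in `EuclideanSpace ℝ (Π i, E_i)`) which depend
only on the coordinates in `a`. -/
def factorSub (a : Set I) : Submodule ℝ (EuclideanSpace ℝ (∀ i, Ei i)) where
  carrier := {f | ∀ x y : (∀ i, Ei i), (∀ i ∈ a, x i = y i) → f x = f y}
  add_mem' := by
    intro f g hf hg x y h
    simp only [PiLp.add_apply, hf x y h, hg x y h]
  zero_mem' := by intro x y h; rfl
  smul_mem' := by
    intro c f hf x y h
    simp only [PiLp.smul_apply, hf x y h]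

/-- The interaction subspace `S_a = V_a ∩ (Σ_{b ⊊ a} V_b)^⊥`. -/
noncomputable def interactionSub (a : Set I) : Submodule ℝ (EuclideanSpace ℝ (∀ i, Ei i)) :=
  factorSub a ⊓ (⨆ b ∈ {b : Set I | b ⊂ a}, (factorSub b : Submodule ℝ (EuclideanSpace ℝ (∀ i, Ei i))))ᗮ

lemma mem_factorSub {a : Set I} {f : EuclideanSpace ℝ (∀ i, Ei i)} :
    f ∈ (factorSub a : Submodule ℝ (EuclideanSpace ℝ (∀ i, Ei i))) ↔
      ∀ x y : (∀ i, Ei i), (∀ i ∈ a, x i = y i) → f x = f y := Iff.rfl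

lemma factorSub_mono {b c : Set I} (h : b ⊆ c) :
    (factorSub b : Submodule ℝ (EuclideanSpace ℝ (∀ i, Ei i))) ≤ factorSub c :=
  fun f hf x y hxy => hf x y fun i hi => hxy i (h hi)

open Classical in
noncomputable def patch (b : Set I) (x z : ∀ i, Ei i) : ∀ i, Ei i :=
  fun i => if i ∈ b then x i else z i

lemma patch_patch (b : Set I) (x z : ∀ i, Ei i) :
    patch b (patch b x z) (patch b z x) = x := by
  funext i
  simp only [patch]
  by_cases h : i ∈ b <;> simp [h]

noncomputable def avg (b : Set I) (v : EuclideanSpace ℝ (∀ i, Ei i)) :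
    EuclideanSpace ℝ (∀ i, Ei i) :=
  WithLp.toLp 2 (fun x => (Fintype.card (∀ i, Ei i) : ℝ)⁻¹ * ∑ z, v (patch b x z))

lemma avg_mem_inter {b c : Set I} {v : EuclideanSpace ℝ (∀ i, Ei i)}
    (hv : v ∈ (factorSub c : Submodule ℝ (EuclideanSpace ℝ (∀ i, Ei i)))) :
    avg b v ∈ (factorSub (b ∩ c) : Submodule ℝ (EuclideanSpace ℝ (∀ i, Ei i))) := by
  intro x y h
  show (Fintype.card (∀ i, Ei i) : ℝ)⁻¹ * ∑ z, v (patch b x z)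
      = (Fintype.card (∀ i, Ei i) : ℝ)⁻¹ * ∑ z, v (patch b y z)
  congr 1
  refine Finset.sum_congr rfl fun z _ => hv _ _ fun i hi => ?_
  simp only [patch]
  by_cases hib : i ∈ b
  · simp [hib, h i ⟨hib, hi⟩]
  · simp [hib]

lemma inner_avg [Nonempty (∀ i, Ei i)] {b : Set I}
    (v : EuclideanSpace ℝ (∀ i, Ei i)) {g : EuclideanSpace ℝ (∀ i, Ei i)}
    (hg : g ∈ (factorSub b : Submodule ℝ (EuclideanSpace ℝ (∀ i, Ei i)))) :
    (inner ℝ (avg b v) g : ℝ) = inner ℝ v g := by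
  have hc : (Fintype.card (∀ i, Ei i) : ℝ) ≠ 0 := by
    exact_mod_cast Fintype.card_ne_zero
  have key : ∀ x z, g (patch b x z) = g x := fun x z =>
    hg _ _ (fun i hi => by simp [patch, hi])
  simp only [PiLp.inner_apply, RCLike.inner_apply', conj_trivial]
  have hsum : ∑ x, ∑ z, v (patch b x z) * g (patch b x z)
      = (Fintype.card (∀ i, Ei i) : ℝ) * ∑ x, v x * g x := by
    calc ∑ x, ∑ z, v (patch b x z) * g (patch b x z)
        = ∑ p : ((∀ i, Ei i) × (∀ i, Ei i)), v (patch b p.1 p.2) * g (patch b p.1 p.2) :=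
          (Fintype.sum_prod_type (f := fun p => v (patch b p.1 p.2) * g (patch b p.1 p.2))).symm
      _ = ∑ p : ((∀ i, Ei i) × (∀ i, Ei i)), v p.1 * g p.1 :=
          Fintype.sum_equiv
            { toFun := fun p => (patch b p.1 p.2, patch b p.2 p.1)
              invFun := fun p => (patch b p.1 p.2, patch b p.2 p.1)
              left_inv := fun p => Prod.ext (patch_patch b p.1 p.2) (patch_patch b p.2 p.1)
              right_inv := fun p => Prod.ext (patch_patch b p.1 p.2) (patch_patch b p.2 p.1) }
            _ _ (fun p => rfl)
      _ = ∑ x, ∑ _z : (∀ i, Ei i), v x * g x :=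
          Fintype.sum_prod_type (f := fun p => v p.1 * g p.1)
      _ = (Fintype.card (∀ i, Ei i) : ℝ) * ∑ x, v x * g x := by
          simp [Finset.sum_const, Finset.mul_sum, mul_comm]
  calc ∑ x, avg b v x * g x
      = (Fintype.card (∀ i, Ei i) : ℝ)⁻¹ *
          ∑ x, ∑ z, v (patch b x z) * g (patch b x z) := by
        simp only [avg, key]
        rw [Finset.mul_sum]
        refine Finset.sum_congr rfl fun x _ => ?_
        rw [mul_assoc, Finset.sum_mul]
    _ = ∑ x, v x * g x := by
        rw [hsum, ← mul_assoc, inv_mul_cancel₀ hc, one_mul]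

lemma interaction_orth_aux [Nonempty (∀ i, Ei i)] {b c : Set I} (h : ¬ c ⊆ b)
    {u v : EuclideanSpace ℝ (∀ i, Ei i)}
    (hu : u ∈ (interactionSub b : Submodule ℝ (EuclideanSpace ℝ (∀ i, Ei i))))
    (hv : v ∈ (interactionSub c : Submodule ℝ (EuclideanSpace ℝ (∀ i, Ei i)))) :
    (inner ℝ u v : ℝ) = 0 := by
  obtain ⟨hu1, _⟩ := Submodule.mem_inf.mp hu
  obtain ⟨hv1, hv2⟩ := Submodule.mem_inf.mp hv
  have h1 : (inner ℝ (avg c u) v : ℝ) = inner ℝ u v := inner_avg u hv1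
  have hss : c ∩ b ⊂ c := by
    refine HasSubset.Subset.ssubset_of_ne Set.inter_subset_left fun he => h ?_
    conv_lhs => rw [← he]
    exact Set.inter_subset_right
  have h2 : avg c u ∈ (⨆ d ∈ {d : Set I | d ⊂ c},
      (factorSub d : Submodule ℝ (EuclideanSpace ℝ (∀ i, Ei i)))) := by
    have hm := avg_mem_inter (b := c) (c := b) hu1
    exact le_iSup₂ (f := fun d (_ : d ∈ {d : Set I | d ⊂ c}) =>
      (factorSub d : Submodule ℝ (EuclideanSpace ℝ (∀ i, Ei i)))) (c ∩ b) hss hm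
  have h3 : (inner ℝ (avg c u) v : ℝ) = 0 := (Submodule.mem_orthogonal _ v).mp hv2 _ h2
  rw [← h1, h3]

lemma factorSub_eq_sup : ∀ (n : ℕ) (a : Set I), a.ncard = n →
    (factorSub a : Submodule ℝ (EuclideanSpace ℝ (∀ i, Ei i))) =
      ⨆ b ∈ {b : Set I | b ⊆ a},
        (interactionSub b : Submodule ℝ (EuclideanSpace ℝ (∀ i, Ei i))) := by
  intro n
  induction n using Nat.strong_induction_on with
  | _ n IH =>
    intro a ha
    set W : Submodule ℝ (EuclideanSpace ℝ (∀ i, Ei i)) :=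
      ⨆ b ∈ {b : Set I | b ⊂ a}, (factorSub b : Submodule ℝ (EuclideanSpace ℝ (∀ i, Ei i)))
      with hWdef
    have hWle : W ≤ factorSub a := iSup₂_le fun b hb => factorSub_mono hb.subset
    have hsum : W ⊔ (Wᗮ ⊓ factorSub a) = factorSub a :=
      Submodule.sup_orthogonal_inf_of_hasOrthogonalProjection hWle
    have hS : (interactionSub a : Submodule ℝ (EuclideanSpace ℝ (∀ i, Ei i)))
        = Wᗮ ⊓ factorSub a := inf_comm _ _
    have hWeq : W = ⨆ b ∈ {b : Set I | b ⊂ a},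
        (interactionSub b : Submodule ℝ (EuclideanSpace ℝ (∀ i, Ei i))) := by
      apply le_antisymm
      · refine iSup₂_le fun b hb => ?_
        rw [IH b.ncard (ha ▸ Set.ncard_lt_ncard hb a.toFinite) b rfl]
        refine iSup₂_le fun c hc => ?_
        exact le_iSup₂ (f := fun c (_ : c ∈ {c : Set I | c ⊂ a}) =>
          (interactionSub c : Submodule ℝ (EuclideanSpace ℝ (∀ i, Ei i)))) c
          (Set.mem_setOf_eq.mpr (Set.ssubset_of_subset_of_ssubset hc hb))
      · refine iSup₂_le fun b hb => ?_
        exact (inf_le_left : (interactionSub b : Submodule ℝ _) ≤ factorSub b).trans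
          (le_iSup₂ (f := fun b (_ : b ∈ {b : Set I | b ⊂ a}) =>
            (factorSub b : Submodule ℝ (EuclideanSpace ℝ (∀ i, Ei i)))) b hb)
    rw [← hsum, ← hS, hWeq]
    apply le_antisymm
    · apply sup_le
      · exact iSup₂_le fun b hb => le_iSup₂ (f := fun b (_ : b ∈ {b : Set I | b ⊆ a}) =>
          (interactionSub b : Submodule ℝ (EuclideanSpace ℝ (∀ i, Ei i)))) b (Set.mem_setOf_eq.mpr hb.subset)
      · exact le_iSup₂ (f := fun b (_ : b ∈ {b : Set I | b ⊆ a}) =>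
          (interactionSub b : Submodule ℝ (EuclideanSpace ℝ (∀ i, Ei i)))) a (Set.mem_setOf_eq.mpr subset_rfl)
    · refine iSup₂_le fun b hb => ?_
      rcases eq_or_lt_of_le (show b ≤ a from hb) with rfl | hlt
      · exact le_sup_right
      · exact le_sup_of_le_left (le_iSup₂ (f := fun b (_ : b ∈ {b : Set I | b ⊂ a}) =>
          (interactionSub b : Submodule ℝ (EuclideanSpace ℝ (∀ i, Ei i)))) b hlt)


/-- For every `a ⊆ I`, the interaction subspaces `(S_b)_{b ⊆ a}` are
pairwise orthogonal and `V_a = ⊕_{b ⊆ a} S_b` is an orthogonal internal direct sum. -/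
theorem factorSub_eq_iSup_interactionSub (a : Set I) :
    (∀ b c : Set I, b ⊆ a → c ⊆ a → b ≠ c →
      ∀ u ∈ (interactionSub b : Submodule ℝ (EuclideanSpace ℝ (∀ i, Ei i))),
      ∀ v ∈ (interactionSub c : Submodule ℝ (EuclideanSpace ℝ (∀ i, Ei i))),
        (inner ℝ u v : ℝ) = 0) ∧
    (factorSub a : Submodule ℝ (EuclideanSpace ℝ (∀ i, Ei i))) =
      ⨆ b ∈ {b : Set I | b ⊆ a}, (interactionSub b : Submodule ℝ (EuclideanSpace ℝ (∀ i, Ei i))) := by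
  constructor
  · intro b c _ _ hne u hu v hv
    by_cases hE : Nonempty (∀ i, Ei i)
    · by_cases hcb : c ⊆ b
      · have hbc : ¬ b ⊆ c := fun hbc => hne (subset_antisymm hbc hcb)
        rw [real_inner_comm]
        exact interaction_orth_aux hbc hv hu
      · exact interaction_orth_aux hcb hu hv
    · haveI := not_nonempty_iff.mp hE
      have : u = 0 := PiLp.ext fun x => (not_nonempty_iff.mp hE).elim x
      rw [this, inner_zero_left]
  · exact factorSub_eq_sup a.ncard a rfl
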